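/- If J is a squarefree monomial ideal in S = k[x_1,...,x_n], t >= 1, and f is a monomial with J^t : f = (x_1,...,x_s) a monomial prime ideal, then the exponent of x_i in f is strictly less than t for each i = 1,...,s. -/

import Mathlib

open MvPolynomial
open scoped Pointwise

private lemma mon_prod {n : ℕ} {k : Type*} [Field k] {ι : Type*} (s : Finset ι)
    (d : ι → Fin n →₀ ℕ) :
    ∏ j ∈ s, (monomial (d j) (1 : k)) = monomial (∑ j ∈ s, d j) 1 := by
  classical
  induction s using Finset.induction with
  | empty => simp
  | insert _ _ h ih =>
    rw [Finset.prod_insert h, Finset.sum_insert h, ih, monomial_mul, one_mul]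

/-- If `J` is a squarefree monomial ideal in `k[x_1, …, x_n]`, `t ≥ 1`, and `f = x^a` is a
monomial such that `J^t : f` is the monomial prime ideal `(x_1, …, x_s)`, then the exponent
of `x_i` in `f` is strictly less than `t` for each `i ≤ s`. -/
theorem deg_lt_t_of_colon_pow_eq_prime {n s t : ℕ} {k : Type*} [Field k]
    (hs : s ≤ n) (ht : 1 ≤ t)
    (B : Set (Finset (Fin n))) (J : Ideal (MvPolynomial (Fin n) k))
    (hJ : J = Ideal.span ((fun w : Finset (Fin n) => ∏ j ∈ w, (X j : MvPolynomial (Fin n) k)) '' B))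
    (a : Fin n →₀ ℕ)
    (hcolon : Submodule.colon (J ^ t) (Ideal.span {monomial a (1 : k)}) =
      Ideal.span ((fun i : Fin n => (X i : MvPolynomial (Fin n) k)) '' {i | (i : ℕ) < s})) :
    ∀ i : Fin n, (i : ℕ) < s → a i < t := by
  classical
  intro i hi
  by_contra hlt
  push_neg at hlt
  set ind : Finset (Fin n) → (Fin n →₀ ℕ) := fun w => ∑ j ∈ w, Finsupp.single j 1 with hind
  have hJ' : J = Ideal.span ((fun d => monomial d (1 : k)) '' (ind '' B)) := by
    rw [hJ, Set.image_image]
    congr 1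
    apply Set.image_congr
    intro w _
    rw [hind]
    simp only []
    rw [← mon_prod w (fun j => Finsupp.single j 1)]
    exact Finset.prod_congr rfl fun j _ => rfl
  set T : Set (Fin n →₀ ℕ) :=
    {d | ∃ g : Fin t → Finset (Fin n), (∀ j, g j ∈ B) ∧ ∑ j, ind (g j) = d} with hT
  have hpow : (J ^ t : Ideal (MvPolynomial (Fin n) k)) =
      Ideal.span ((fun d => monomial d (1 : k)) '' T) := by
    rw [hJ']
    refine (Submodule.span_pow _ t).trans ?_
    congr 1
    ext p
    rw [Set.mem_pow]
    constructor
    · rintro ⟨f, hf⟩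
      have hch : ∀ j : Fin t, ∃ w : Finset (Fin n), w ∈ B ∧
          (f j : MvPolynomial (Fin n) k) = monomial (ind w) 1 := by
        intro j
        obtain ⟨d, ⟨w, hw, rfl⟩, hd⟩ := (f j).2
        exact ⟨w, hw, hd.symm⟩
      choose g hgB hg using hch
      refine ⟨∑ j, ind (g j), ⟨g, hgB, rfl⟩, ?_⟩
      rw [← hf, List.prod_ofFn]
      show monomial (∑ j, ind (g j)) (1 : k) = _
      rw [← mon_prod]
      exact Finset.prod_congr rfl fun j _ => (hg j).symm
    · rintro ⟨d, ⟨g, hg, rfl⟩, rfl⟩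
      refine ⟨fun j => ⟨monomial (ind (g j)) 1, ⟨ind (g j), ⟨g j, hg j, rfl⟩, rfl⟩⟩, ?_⟩
      rw [List.prod_ofFn]
      exact mon_prod Finset.univ fun j => ind (g j)
  have hXi : (X i : MvPolynomial (Fin n) k) ∈
      Submodule.colon (J ^ t) (Ideal.span {monomial a (1 : k)}) := by
    rw [hcolon]; exact Ideal.subset_span ⟨i, hi, rfl⟩
  have h1 : monomial (Finsupp.single i 1 + a) (1 : k) ∈ J ^ t := by
    have hm := Submodule.mem_colon.mp hXi (monomial a 1) (Ideal.subset_span rfl)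
    have hX : (X i : MvPolynomial (Fin n) k) = monomial (Finsupp.single i 1) 1 := rfl
    rw [smul_eq_mul, hX, monomial_mul, one_mul] at hm
    exact hm
  rw [hpow, mem_ideal_span_monomial_image] at h1
  have hsupp : (monomial (Finsupp.single i 1 + a) (1 : k)).support
      = {Finsupp.single i 1 + a} := by
    rw [support_monomial, if_neg one_ne_zero]
  obtain ⟨d, hdT, hd⟩ := h1 _ (by rw [hsupp]; exact Finset.mem_singleton_self _)
  have hda : d ≤ a := by
    obtain ⟨g, hg, rfl⟩ := hdT
    rw [Finsupp.le_def]
    intro j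
    rcases eq_or_ne j i with rfl | hj
    · have hb : (∑ l : Fin t, ind (g l)) j ≤ t := by
        rw [Finsupp.finset_sum_apply]
        calc ∑ l : Fin t, (ind (g l)) j ≤ ∑ _l : Fin t, 1 := by
              apply Finset.sum_le_sum
              intro l _
              rw [hind]
              simp only [Finsupp.finset_sum_apply, Finsupp.single_apply, Finset.sum_ite_eq']
              split <;> simp
          _ = t := by simp
      exact hb.trans hlt
    · have h2 := Finsupp.le_def.mp hd j
      rwa [Finsupp.add_apply, Finsupp.single_apply, if_neg (Ne.symm hj), zero_add] at h2
  have hf : monomial a (1 : k) ∈ J ^ t := by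
    rw [hpow, mem_ideal_span_monomial_image]
    intro xi hxi
    rw [support_monomial, if_neg one_ne_zero, Finset.mem_singleton] at hxi
    exact ⟨d, hdT, hxi ▸ hda⟩
  have hone : (1 : MvPolynomial (Fin n) k) ∈
      Submodule.colon (J ^ t) (Ideal.span {monomial a (1 : k)}) := by
    rw [Submodule.mem_colon]
    intro p hp
    obtain ⟨c, rfl⟩ := Ideal.mem_span_singleton'.mp hp
    rw [smul_eq_mul, one_mul]
    exact Ideal.mul_mem_left _ _ hf
  rw [hcolon, mem_ideal_span_X_image] at hone
  obtain ⟨j, _, hj⟩ := hone 0 (by simp)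
  simp at hj
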